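/- Let (Ω, ℱ, P) be a probability space and let A, B, R be events with P(R) > 0 and P(Rᶜ) > 0. Suppose A and B are conditionally independent given R, i.e., P(A ∩ B ∩ R)·P(R) = P(A ∩ R)·P(B ∩ R), and suppose the conditional laws given R match the unconditional ones on A and B in the sense that P(A | R) = P(A) and P(B | R) = P(B). Then |P(A ∩ B) − P(A)·P(B)| ≤ 3·P(Rᶜ). -/
import Mathlib


open MeasureTheory

/-- If events `A`, `B` are conditionally independent given an event `R` with
`P(R) > 0`, `P(Rᶜ) > 0`, and the conditional laws given `R` agree with the unconditional ones on
`A` and `B` (`P(A|R) = P(A)`, `P(B|R) = P(B)`), then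
`|P(A ∩ B) - P(A)·P(B)| ≤ 3·P(Rᶜ)`. -/
theorem delta_independence_from_renewal
    {Ω : Type*} [MeasurableSpace Ω] (P : Measure Ω) [IsProbabilityMeasure P]
    (A B R : Set Ω)
    (hA : MeasurableSet A) (hB : MeasurableSet B) (hR : MeasurableSet R)
    (hRpos : 0 < P R) (hRcpos : 0 < P Rᶜ)
    (hcondindep : (P (A ∩ B ∩ R)).toReal * (P R).toReal
      = (P (A ∩ R)).toReal * (P (B ∩ R)).toReal)
    (hAR : (P (A ∩ R)).toReal / (P R).toReal = (P A).toReal)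
    (hBR : (P (B ∩ R)).toReal / (P R).toReal = (P B).toReal) :
    |(P (A ∩ B)).toReal - (P A).toReal * (P B).toReal| ≤ 3 * (P Rᶜ).toReal := by
  have hfin : ∀ S : Set Ω, P S ≠ ⊤ := fun S => measure_ne_top P S
  have hrpos : 0 < (P R).toReal := ENNReal.toReal_pos hRpos.ne' (hfin R)
  have hsplit : P (A ∩ B ∩ R) + P ((A ∩ B) \ R) = P (A ∩ B) :=
    measure_inter_add_diff (A ∩ B) hR
  have hsplit' : (P (A ∩ B)).toReal
      = (P (A ∩ B ∩ R)).toReal + (P ((A ∩ B) \ R)).toReal := by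
    rw [← ENNReal.toReal_add (hfin _) (hfin _), hsplit]
  have hARe : (P (A ∩ R)).toReal = (P A).toReal * (P R).toReal :=
    (div_eq_iff hrpos.ne').mp hAR
  have hBRe : (P (B ∩ R)).toReal = (P B).toReal * (P R).toReal :=
    (div_eq_iff hrpos.ne').mp hBR
  have hABR : (P (A ∩ B ∩ R)).toReal = (P A).toReal * (P B).toReal * (P R).toReal := by
    have h := hcondindep
    rw [hARe, hBRe] at h
    have := mul_right_cancel₀ hrpos.ne' (by linarith [h] : (P (A ∩ B ∩ R)).toReal * (P R).toReal = ((P A).toReal * (P B).toReal * (P R).toReal) * (P R).toReal)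
    exact this
  have hre : (P R).toReal + (P Rᶜ).toReal = 1 := by
    rw [← ENNReal.toReal_add (hfin _) (hfin _)]
    simp [measure_add_measure_compl hR]
  have hy : (P ((A ∩ B) \ R)).toReal ≤ (P Rᶜ).toReal := by
    apply ENNReal.toReal_mono (hfin _)
    apply measure_mono
    rw [Set.diff_eq]
    exact Set.inter_subset_right
  have hy0 : 0 ≤ (P ((A ∩ B) \ R)).toReal := ENNReal.toReal_nonneg
  have ha0 : 0 ≤ (P A).toReal := ENNReal.toReal_nonneg
  have hb0 : 0 ≤ (P B).toReal := ENNReal.toReal_nonneg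
  have ha1 : (P A).toReal ≤ 1 := by
    have := prob_le_one (μ := P) (s := A)
    simpa using ENNReal.toReal_mono ENNReal.one_ne_top this
  have hb1 : (P B).toReal ≤ 1 := by
    have := prob_le_one (μ := P) (s := B)
    simpa using ENNReal.toReal_mono ENNReal.one_ne_top this
  rw [hsplit', hABR, abs_le]
  have hab1 : (P A).toReal * (P B).toReal ≤ 1 := mul_le_one₀ ha1 hb0 hb1
  have hab0 : 0 ≤ (P A).toReal * (P B).toReal := mul_nonneg ha0 hb0
  have he0 : 0 ≤ (P Rᶜ).toReal := ENNReal.toReal_nonneg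
  constructor <;> nlinarith [mul_le_of_le_one_left he0 hab1, mul_nonneg hab0 he0]
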